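/- A T₀ topological space X is metrizable if and only if there is a sequence of open covers {𝒰_n}_{n≥1} such that for every x ∈ X the sets {st(x, st(𝒰_n))}_{n≥1} form a neighborhood basis at x. (This includes, as a corollary, Moore's metrization theorem: X is metrizable iff it is T₀ and there is a sequence of open covers 𝒰_n such that for each x and each open neighborhood U of x there exist n and a neighborhood V of x with st(V,𝒰_n) ⊆ U.) -/

import Mathlib

noncomputable section
open Set Topology TopologicalSpace

/-- `𝒰` is an open cover of `X`. -/
def IsOpenCover {X : Type} [TopologicalSpace X] (𝒰 : Set (Set X)) : Prop :=
  (∀ U ∈ 𝒰, IsOpen U) ∧ ⋃₀ 𝒰 = univ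

/-- Star of a point with respect to a family of sets. -/
def ptStar {X : Type} (x : X) (𝒰 : Set (Set X)) : Set X := ⋃₀ {U | U ∈ 𝒰 ∧ x ∈ U}

/-- Star of a set with respect to a family of sets. -/
def setStar {X : Type} (A : Set X) (𝒰 : Set (Set X)) : Set X :=
  ⋃₀ {U | U ∈ 𝒰 ∧ (U ∩ A).Nonempty}

/-- `𝒱` star-refines `𝒰`. -/
def StarRefines {X : Type} (𝒱 𝒰 : Set (Set X)) : Prop :=
  ∀ x : X, ∃ U ∈ 𝒰, ptStar x 𝒱 ⊆ U

/-- A continuous partition of unity viewed as a map into `l¹(S)` with image in `Δ(S)`. -/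
def IsPU {X S : Type} [TopologicalSpace X] (f : X → lp (fun _ : S => ℝ) 1) : Prop :=
  Continuous f ∧ ∀ x : X, (∀ s : S, 0 ≤ f x s) ∧ HasSum (fun s => f x s) 1

/-- The partition of unity `f` is `𝒰`-small: each carrier lies in a member of `𝒰`. -/
def IsUSmall {X S : Type} [TopologicalSpace X] (𝒰 : Set (Set X))
    (f : X → lp (fun _ : S => ℝ) 1) : Prop :=
  ∀ s : S, ∃ U ∈ 𝒰, {x : X | f x s ≠ 0} ⊆ U

/-- There exists a `𝒰`-small partition of unity on `X`. -/
def ExistsUSmallPU {X : Type} [TopologicalSpace X] (𝒰 : Set (Set X)) : Prop :=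
  ∃ (S : Type) (f : X → lp (fun _ : S => ℝ) 1), IsPU f ∧ IsUSmall 𝒰 f

/-- An indexed family of sets is discrete. -/
def DiscreteFam {X S : Type} [TopologicalSpace X] (A : S → Set X) : Prop :=
  ∀ x : X, ∃ N ∈ nhds x, {s : S | (A s ∩ N).Nonempty}.Subsingleton

/-- A family of sets (as a set of sets) is discrete. -/
def DiscreteSetFam {X : Type} [TopologicalSpace X] (𝒜 : Set (Set X)) : Prop :=
  ∀ x : X, ∃ N ∈ nhds x, {A | A ∈ 𝒜 ∧ (A ∩ N).Nonempty}.Subsingleton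

/-- `𝒰` has a σ-discrete closed refinement. -/
def HasSigmaDiscreteClosedRefinement {X : Type} [TopologicalSpace X]
    (𝒰 : Set (Set X)) : Prop :=
  ∃ D : ℕ → Set (Set X), (∀ n, DiscreteSetFam (D n)) ∧
    (∀ n, ∀ F ∈ D n, IsClosed F) ∧
    (∀ n, ∀ F ∈ D n, ∃ U ∈ 𝒰, F ⊆ U) ∧
    ⋃₀ (⋃ n, D n) = univ

/-- `X` is collectionwise normal. -/
def CwNormal (X : Type) [TopologicalSpace X] : Prop :=
  ∀ (S : Type) (A : S → Set X), (∀ s, IsClosed (A s)) → DiscreteFam A →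
    ∃ V : S → Set X, (∀ s, IsOpen (V s)) ∧ (∀ s, A s ⊆ V s) ∧ DiscreteFam V


/-- Our convenient form of discreteness of an `X`-indexed family. -/
def Disc {X : Type} [TopologicalSpace X] (A : X → Set X) : Prop :=
  ∀ z : X, ∃ N : Set X, IsOpen N ∧ z ∈ N ∧ {p | (A p ∩ N).Nonempty}.Subsingleton


open BoundedContinuousFunction

/-- A discrete copy of `X`, used as an index type. -/
def DiscIdx (X : Type) : Type := X
instance : TopologicalSpace (DiscIdx X) := ⊥
instance : DiscreteTopology (DiscIdx X) := ⟨rfl⟩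

structure StarKit (X : Type) [TopologicalSpace X] where
  R : ℕ → X → X → Prop
  refl : ∀ n x, R n x x
  symm : ∀ {n x y}, R n x y → R n y x
  anti : ∀ {m n x y}, m ≤ n → R n x y → R m x y
  opn : ∀ n x, IsOpen {y | R n x y}
  nbhd : ∀ (m : ℕ) (z : X), ∃ V : Set X, IsOpen V ∧ z ∈ V ∧ ∀ ⦃y y'⦄, y ∈ V → y' ∈ V → R m y y'
  base : ∀ (x : X) (U : Set X), IsOpen U → x ∈ U → ∃ n, {z | ∃ y, R n x y ∧ R n y z} ⊆ U

namespace StarKit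

variable {X : Type} [TopologicalSpace X] (K : StarKit X)

def g (n : ℕ) (x : X) : Set X := {y | K.R n x y}

def h (n : ℕ) (x : X) : Set X := {z | ∃ y, K.R n x y ∧ K.R n y z}

lemma mem_g_self (n : ℕ) (x : X) : x ∈ K.g n x := K.refl n x

lemma g_subset_h (n : ℕ) (x : X) : K.g n x ⊆ K.h n x :=
  fun z hz => ⟨x, K.refl n x, hz⟩

lemma isOpen_g (n : ℕ) (x : X) : IsOpen (K.g n x) := K.opn n x

lemma base' (x : X) (U : Set X) (hU : IsOpen U) (hx : x ∈ U) :
    ∃ n, K.h n x ⊆ U := K.base x U hU hx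

/-- The key crossing lemma. -/
lemma cross {a b : ℕ} {x y w : X} (hab : a ≤ b) (hxw : K.R a x w) (hyw : K.R b y w) :
    y ∈ K.h a x :=
  ⟨w, hxw, K.symm (K.anti hab hyw)⟩

include K in
lemma normalSpace : NormalSpace X := by
  constructor
  intro A B hA hB hAB
  have hchA : ∀ x ∈ A, ∃ n, K.h n x ⊆ Bᶜ := fun x hx =>
    K.base' x Bᶜ hB.isOpen_compl (fun hxB => absurd rfl (hAB.ne_of_mem hx hxB ·)) |>.imp
      fun n hn => hn
  have hchB : ∀ y ∈ B, ∃ n, K.h n y ⊆ Aᶜ := fun y hy =>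
    K.base' y Aᶜ hA.isOpen_compl (fun hyA => absurd rfl (hAB.ne_of_mem hyA hy ·)) |>.imp
      fun n hn => hn
  choose! nA hnA using hchA
  choose! nB hnB using hchB
  refine ⟨⋃ x ∈ A, K.g (nA x) x, ⋃ y ∈ B, K.g (nB y) y, ?_, ?_, ?_, ?_, ?_⟩
  · exact isOpen_biUnion fun x _ => K.isOpen_g _ x
  · exact isOpen_biUnion fun y _ => K.isOpen_g _ y
  · exact fun x hx => mem_biUnion hx (K.mem_g_self _ x)
  · exact fun y hy => mem_biUnion hy (K.mem_g_self _ y)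
  · rw [Set.disjoint_left]
    rintro w hw1 hw2
    simp only [mem_iUnion] at hw1 hw2
    obtain ⟨x, hx, hxw⟩ := hw1
    obtain ⟨y, hy, hyw⟩ := hw2
    rcases le_total (nA x) (nB y) with hle | hle
    · exact hnA x hx (K.cross hle hxw hyw) hy
    · exact hnB y hy (K.cross hle hyw hxw) hx



lemma disc_pairwise {A : X → Set X} (hd : Disc A) {p q : X} {x : X}
    (hp : x ∈ A p) (hq : x ∈ A q) : p = q := by
  obtain ⟨N, _, hzN, hss⟩ := hd x
  exact hss ⟨x, hp, hzN⟩ ⟨x, hq, hzN⟩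

lemma disc_isClosed_biUnion {A : X → Set X} (hd : Disc A) (hcl : ∀ p, IsClosed (A p))
    (T : Set X) : IsClosed (⋃ p ∈ T, A p) := by
  rw [← isOpen_compl_iff, isOpen_iff_mem_nhds]
  intro z hz
  simp only [mem_compl_iff, mem_iUnion, not_exists] at hz
  obtain ⟨N, hNo, hzN, hss⟩ := hd z
  by_cases hex : ∃ p ∈ T, (A p ∩ N).Nonempty
  · obtain ⟨p1, hp1T, hp1⟩ := hex
    have hzp1 : z ∉ A p1 := hz p1 hp1T
    refine Filter.mem_of_superset ((hNo.sdiff (hcl p1)).mem_nhds ⟨hzN, hzp1⟩) ?_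
    intro w hw
    simp only [mem_compl_iff, mem_iUnion, not_exists]
    intro p hpT hwp
    exact hw.2 (hss ⟨w, hwp, hw.1⟩ hp1 ▸ hwp)
  · refine Filter.mem_of_superset (hNo.mem_nhds hzN) ?_
    intro w hw
    simp only [mem_compl_iff, mem_iUnion, not_exists]
    intro p hpT hwp
    exact hex ⟨p, hpT, ⟨w, hwp, hw⟩⟩

/-- A choice of a "uniformly small of degree `n`" open neighborhood of `p`. -/
def c (n : ℕ) (p : X) : Set X := (K.nbhd n p).choose

lemma c_isOpen (n : ℕ) (p : X) : IsOpen (K.c n p) := (K.nbhd n p).choose_spec.1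

lemma mem_c_self (n : ℕ) (p : X) : p ∈ K.c n p := (K.nbhd n p).choose_spec.2.1

lemma c_rel {n : ℕ} {p y y' : X} (hy : y ∈ K.c n p) (hy' : y' ∈ K.c n p) : K.R n y y' :=
  (K.nbhd n p).choose_spec.2.2 hy hy'

def F (n m : ℕ) (p : X) : Set X :=
  {x | K.g m x ⊆ K.c n p ∧ ∀ q, WellOrderingRel q p → x ∉ K.c n q}

def C (n m : ℕ) (p : X) : Set X := closure (K.F n m p)

lemma C_isClosed (n m : ℕ) (p : X) : IsClosed (K.C n m p) := isClosed_closure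

lemma C_subset_c (n m : ℕ) (p : X) : K.C n m p ⊆ K.c n p := by
  intro z hz
  obtain ⟨V, hVo, hzV, hV⟩ := K.nbhd m z
  obtain ⟨y, hyV, hyF⟩ := mem_closure_iff.mp hz V hVo hzV
  exact hyF.1 (hV hyV hzV)

lemma C_disc (n m : ℕ) : Disc (K.C n m) := by
  intro z
  obtain ⟨V, hVo, hzV, hV⟩ := K.nbhd m z
  refine ⟨V, hVo, hzV, ?_⟩
  intro p hp q hq
  obtain ⟨w, hwC, hwV⟩ := hp
  obtain ⟨y, hyV, hyF⟩ := mem_closure_iff.mp hwC V hVo hwV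
  obtain ⟨w', hw'C, hw'V⟩ := hq
  obtain ⟨y', hy'V, hy'F⟩ := mem_closure_iff.mp hw'C V hVo hw'V
  rcases trichotomous_of WellOrderingRel p q with hlt | heq | hgt
  · exact absurd (hyF.1 (hV hyV hy'V)) (hy'F.2 p hlt)
  · exact heq
  · exact absurd (hy'F.1 (hV hy'V hyV)) (hyF.2 q hgt)

lemma C_cover (x : X) (n : ℕ) : ∃ m p, x ∈ K.C n m p := by
  have hwf : WellFounded (WellOrderingRel : X → X → Prop) := IsWellFounded.wf
  have hS : {p : X | x ∈ K.c n p}.Nonempty := ⟨x, K.mem_c_self n x⟩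
  set p0 := hwf.min _ hS with hp0
  have hxp0 : x ∈ K.c n p0 := hwf.min_mem _ hS
  obtain ⟨m, hm⟩ := K.base' x (K.c n p0) (K.c_isOpen n p0) hxp0
  refine ⟨m, p0, subset_closure ⟨subset_trans (K.g_subset_h m x) hm, ?_⟩⟩
  intro q hq hxq
  exact hwf.not_lt_min {p : X | x ∈ K.c n p} (show q ∈ {p : X | x ∈ K.c n p} from hxq) hq


include K in
lemma exists_discrete_expansion {A : X → Set X} (hd : Disc A) (hcl : ∀ p, IsClosed (A p))
    {n : ℕ} (hsub : ∀ p, A p ⊆ K.c n p) :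
    ∃ W : X → Set X, (∀ p, IsOpen (W p)) ∧ (∀ p, A p ⊆ W p) ∧ (∀ p, W p ⊆ K.c n p) ∧ Disc W := by
  classical
  -- Step 1: disjoint open expansion `G`
  have hO : ∀ p : X, IsOpen (⋃ q ∈ {q | q ≠ p}, A q)ᶜ := fun p =>
    (disc_isClosed_biUnion hd hcl _).isOpen_compl
  have hmemO : ∀ p x, x ∈ A p → x ∈ (⋃ q ∈ {q | q ≠ p}, A q)ᶜ := by
    intro p x hx hmem
    simp only [mem_iUnion, mem_setOf_eq] at hmem
    obtain ⟨q, hq, hxq⟩ := hmem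
    exact hq (disc_pairwise hd hxq hx)
  have hν : ∀ (p x : X), x ∈ A p → ∃ k, K.h k x ⊆ (⋃ q ∈ {q | q ≠ p}, A q)ᶜ := fun p x hx =>
    K.base' x _ (hO p) (hmemO p x hx)
  choose ν hν using hν
  set G : X → Set X := fun p => ⋃ x, ⋃ (hx : x ∈ A p), K.g (ν p x hx) x with hG
  have hGopen : ∀ p, IsOpen (G p) := fun p =>
    isOpen_iUnion fun x => isOpen_iUnion fun hx => K.isOpen_g _ x
  have hAG : ∀ p, A p ⊆ G p := fun p x hx =>
    mem_iUnion.mpr ⟨x, mem_iUnion.mpr ⟨hx, K.mem_g_self _ x⟩⟩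
  have hGaux : ∀ (p q x y : X) (hx : x ∈ A p) (hy : y ∈ A q) (w : X),
      ν p x hx ≤ ν q y hy → K.R (ν p x hx) x w → K.R (ν q y hy) y w → p = q := by
    intro p q x y hx hy w hle hxw hyw
    have hyh : y ∈ K.h (ν p x hx) x := K.cross hle hxw hyw
    have := hν p x hx hyh
    by_contra hne
    exact this (mem_biUnion (fun h => hne h.symm : q ∈ {q' | q' ≠ p}) hy)
  have hGdisj : ∀ p q w, w ∈ G p → w ∈ G q → p = q := by
    intro p q w hwp hwq
    simp only [hG, mem_iUnion] at hwp hwq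
    obtain ⟨x, hx, hxw⟩ := hwp
    obtain ⟨y, hy, hyw⟩ := hwq
    rcases le_total (ν p x hx) (ν q y hy) with hle | hle
    · exact hGaux p q x y hx hy w hle hxw hyw
    · exact (hGaux q p y x hy hx w hle hyw hxw).symm
  -- Step 2: the discrete refinement `W`
  have hμ : ∀ (p x : X), x ∈ A p → ∃ k, K.h k x ⊆ G p ∩ K.c n p := fun p x hx =>
    K.base' x _ ((hGopen p).inter (K.c_isOpen n p)) ⟨hAG p hx, hsub p hx⟩
  choose μ hμ using hμ
  refine ⟨fun p => ⋃ x, ⋃ (hx : x ∈ A p), K.g (μ p x hx) x, ?_, ?_, ?_, ?_⟩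
  · exact fun p => isOpen_iUnion fun x => isOpen_iUnion fun hx => K.isOpen_g _ x
  · exact fun p x hx => mem_iUnion.mpr ⟨x, mem_iUnion.mpr ⟨hx, K.mem_g_self _ x⟩⟩
  · intro p w hw
    simp only [mem_iUnion] at hw
    obtain ⟨x, hx, hxw⟩ := hw
    exact (hμ p x hx (K.g_subset_h _ x hxw)).2
  · -- discreteness
    intro z
    by_cases hz : ∃ t, z ∈ G t
    · obtain ⟨t1, ht1⟩ := hz
      obtain ⟨kz, hkz⟩ := K.base' z (G t1) (hGopen t1) ht1
      refine ⟨K.g kz z, K.isOpen_g kz z, K.mem_g_self kz z, ?_⟩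
      have key : ∀ p, (⋃ x, ⋃ (hx : x ∈ A p), K.g (μ p x hx) x ∩ K.g kz z).Nonempty → p = t1 := by
        intro p hp
        obtain ⟨w, hw⟩ := hp
        simp only [mem_iUnion] at hw
        obtain ⟨x, hx, hxw, hzw⟩ := hw
        rcases le_total kz (μ p x hx) with hle | hle
        · have hxh : x ∈ K.h kz z := K.cross hle hzw hxw
          exact hGdisj p t1 x (hAG p hx) (hkz hxh)
        · have hzh : z ∈ K.h (μ p x hx) x := K.cross hle hxw hzw
          exact hGdisj p t1 z (hμ p x hx hzh).1 ht1
      intro p hp q hq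
      rw [key p ?_, key q ?_]
      · obtain ⟨w, hw1, hw2⟩ := hq
        simp only [mem_iUnion] at hw1 ⊢
        obtain ⟨x, hx, hxw⟩ := hw1
        exact ⟨w, mem_iUnion.mpr ⟨x, mem_iUnion.mpr ⟨hx, hxw, hw2⟩⟩⟩
      · obtain ⟨w, hw1, hw2⟩ := hp
        simp only [mem_iUnion] at hw1 ⊢
        obtain ⟨x, hx, hxw⟩ := hw1
        exact ⟨w, mem_iUnion.mpr ⟨x, mem_iUnion.mpr ⟨hx, hxw, hw2⟩⟩⟩
    · push_neg at hz
      have hzA : z ∉ ⋃ p ∈ (univ : Set X), A p := by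
        simp only [mem_iUnion, not_exists]
        exact fun p _ hp => hz p (hAG p hp)
      obtain ⟨kz, hkz⟩ := K.base' z _ (disc_isClosed_biUnion hd hcl univ).isOpen_compl hzA
      refine ⟨K.g kz z, K.isOpen_g kz z, K.mem_g_self kz z, ?_⟩
      intro p hp
      exfalso
      obtain ⟨w, hw1, hw2⟩ := hp
      simp only [mem_iUnion] at hw1
      obtain ⟨x, hx, hxw⟩ := hw1
      rcases le_total kz (μ p x hx) with hle | hle
      · have hxh : x ∈ K.h kz z := K.cross hle hw2 hxw
        exact hkz hxh (mem_biUnion (mem_univ p) hx)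
      · have hzh : z ∈ K.h (μ p x hx) x := K.cross hle hxw hw2
        exact hz p (hμ p x hx hzh).1

include K in
lemma stage [NormalSpace X] (n m : ℕ) :
    ∃ e : X → (DiscIdx X →ᵇ ℝ), Continuous e ∧
      ∀ p x y, x ∈ K.C n m p → dist (e x) (e y) < 1 → K.R n x y := by
  classical
  obtain ⟨W, hWo, hAW, hWc, hdW⟩ := K.exists_discrete_expansion (K.C_disc n m)
    (K.C_isClosed n m) (K.C_subset_c n m)
  have hφ : ∀ p : X, ∃ f : C(X, ℝ), EqOn f 0 (W p)ᶜ ∧ EqOn f 1 (K.C n m p) ∧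
      ∀ x, f x ∈ Icc (0 : ℝ) 1 := by
    intro p
    refine exists_continuous_zero_one_of_isClosed (hWo p).isClosed_compl (K.C_isClosed n m p) ?_
    rw [Set.disjoint_left]
    exact fun x hx hxA => hx (hAW p hxA)
  choose φ hφ0 hφ1 hφm using hφ
  have hφ0' : ∀ p x, x ∉ W p → φ p x = 0 := fun p x hx => hφ0 p hx
  set e : X → (DiscIdx X →ᵇ ℝ) := fun x =>
    BoundedContinuousFunction.mkOfBound
      ⟨fun p : DiscIdx X => φ p x, continuous_of_discreteTopology⟩ 1
      (by
        intro p q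
        have h1 := hφm p x
        have h2 := hφm q x
        rw [Real.dist_eq, abs_sub_le_iff]
        simp only [ContinuousMap.coe_mk]
        constructor <;> linarith [h1.1, h1.2, h2.1, h2.2])
    with he
  have hecoe : ∀ (x : X) (p : X), e x p = φ p x := fun x p => rfl
  refine ⟨e, ?_, ?_⟩
  · rw [continuous_iff_continuousAt]
    intro z
    rw [ContinuousAt, Metric.tendsto_nhds]
    intro ε hε
    obtain ⟨N, hNo, hzN, hss⟩ := hdW z
    by_cases hex : ∃ p, (W p ∩ N).Nonempty
    · obtain ⟨p0, hp0⟩ := hex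
      have hopen : IsOpen (N ∩ {y | dist (φ p0 y) (φ p0 z) < ε / 2}) :=
        hNo.inter (isOpen_lt (continuous_dist.comp ((φ p0).continuous.prodMk
          continuous_const)) continuous_const)
      have hmemz : z ∈ N ∩ {y | dist (φ p0 y) (φ p0 z) < ε / 2} :=
        ⟨hzN, by simp [dist_self]; positivity⟩
      refine Filter.eventually_of_mem (hopen.mem_nhds hmemz) ?_
      intro y hy
      have hle : dist (e y) (e z) ≤ ε / 2 := by
        rw [BoundedContinuousFunction.dist_le (by positivity)]
        intro p
        change dist (φ p y) (φ p z) ≤ _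
        by_cases hpp : p = p0
        · subst hpp; exact le_of_lt hy.2
        · have h1 : φ p y = 0 := by
            refine hφ0' p y fun hyW => hpp (hss ⟨y, hyW, hy.1⟩ hp0)
          have h2 : φ p z = 0 := by
            refine hφ0' p z fun hzW => hpp (hss ⟨z, hzW, hzN⟩ hp0)
          rw [h1, h2, dist_self]
          positivity
      linarith
    · refine Filter.eventually_of_mem (hNo.mem_nhds hzN) ?_
      intro y hy
      have hle : dist (e y) (e z) ≤ 0 := by
        rw [BoundedContinuousFunction.dist_le le_rfl]
        intro p
        change dist (φ p y) (φ p z) ≤ _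
        have h1 : φ p y = 0 := hφ0' p y fun hyW => hex ⟨p, y, hyW, hy⟩
        have h2 : φ p z = 0 := hφ0' p z fun hzW => hex ⟨p, z, hzW, hzN⟩
        rw [h1, h2, dist_self]
      linarith
  · intro p x y hxC hdist
    have h1 : φ p x = 1 := hφ1 p hxC
    have h2 : dist (e x p) (e y p) ≤ dist (e x) (e y) :=
      BoundedContinuousFunction.dist_coe_le_dist (f := e x) (g := e y) p
    have h3 : |φ p x - φ p y| < 1 := by
      rw [← Real.dist_eq, ← hecoe, ← hecoe]
      exact lt_of_le_of_lt h2 hdist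
    have h4 : 0 < φ p y := by
      rw [h1] at h3
      rw [abs_lt] at h3
      linarith [h3.1, h3.2]
    have hyW : y ∈ W p := by
      by_contra hyW
      rw [hφ0' p y hyW] at h4
      exact lt_irrefl 0 h4
    exact K.c_rel (K.C_subset_c n m p hxC) (hWc p hyW)

include K in
lemma metrizableSpace [T0Space X] : MetrizableSpace X := by
  classical
  haveI : NormalSpace X := K.normalSpace
  choose e he hball using fun nm : ℕ × ℕ => K.stage nm.1 nm.2
  set E : X → (ℕ × ℕ) → (DiscIdx X →ᵇ ℝ) := fun x k => e k x with hE
  have hEcont : Continuous E := continuous_pi fun k => he k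
  have key : ∀ x U, IsOpen U → x ∈ U → ∃ k : ℕ × ℕ, ∀ y, dist (E x k) (E y k) < 1 → y ∈ U := by
    intro x U hU hx
    obtain ⟨n, hn⟩ := K.base' x U hU hx
    obtain ⟨m, p, hp⟩ := K.C_cover x n
    exact ⟨(n, m), fun y hy => hn ⟨x, K.refl n x, hball (n, m) p x y hp hy⟩⟩
  have hinj : Function.Injective E := by
    intro x y hxy
    refine Inseparable.eq ?_
    rw [inseparable_iff_forall_isOpen]
    intro s hs
    constructor
    · intro hx
      obtain ⟨k, hk⟩ := key x s hs hx
      refine hk y ?_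
      rw [hxy, dist_self]
      exact one_pos
    · intro hy
      obtain ⟨k, hk⟩ := key y s hs hy
      refine hk x ?_
      rw [hxy, dist_self]
      exact one_pos
  have hind : Topology.IsInducing E := by
    rw [Topology.isInducing_iff_nhds]
    intro x
    refine le_antisymm ((hEcont.tendsto x).le_comap) ?_
    intro U hU
    obtain ⟨V, hVU, hVo, hxV⟩ := mem_nhds_iff.mp hU
    obtain ⟨k, hk⟩ := key x V hVo hxV
    refine Filter.mem_comap.mpr ⟨(fun v => v k) ⁻¹' Metric.ball (E x k) 1, ?_, ?_⟩
    · exact (continuous_apply k).continuousAt (Metric.ball_mem_nhds _ one_pos)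
    · intro y hy
      exact hVU (hk y (by rw [dist_comm]; simpa [Metric.mem_ball] using hy))
  haveI : MetrizableSpace ((ℕ × ℕ) → (DiscIdx X →ᵇ ℝ)) :=
    inferInstance
  exact Topology.IsEmbedding.metrizableSpace ⟨hind, hinj⟩

end StarKit

/-- A T₀ space is metrizable iff there is a sequence of open covers `𝒰_n` such that the
sets `st(x, st(𝒰_n))` form a neighborhood basis at every point `x`. -/
theorem stmt19 (X : Type) [TopologicalSpace X] [T0Space X] :
    MetrizableSpace X ↔
      ∃ u : ℕ → Set (Set X), (∀ n, IsOpenCover (u n)) ∧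
        ∀ (x : X) (U : Set X), IsOpen U → x ∈ U →
          ∃ n, ptStar x (Set.range fun y : X => ptStar y (u n)) ⊆ U := by
  constructor
  · intro hm
    letI : MetricSpace X := TopologicalSpace.metrizableSpaceMetric X
    refine ⟨fun n => Set.range fun z : X => Metric.ball z ((1/2 : ℝ)^n), fun n => ⟨?_, ?_⟩, ?_⟩
    · rintro U ⟨z, rfl⟩
      exact Metric.isOpen_ball
    · ext x
      simp only [mem_univ, iff_true, mem_sUnion]
      exact ⟨Metric.ball x ((1/2 : ℝ)^n), ⟨x, rfl⟩, Metric.mem_ball_self (by positivity)⟩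
    · intro x U hU hx
      obtain ⟨ε, hε, hball⟩ := Metric.isOpen_iff.mp hU x hx
      obtain ⟨n, hn⟩ : ∃ n : ℕ, ((1 : ℝ)/2)^n < ε/4 :=
        exists_pow_lt_of_lt_one (by positivity) (by norm_num)
      refine ⟨n, ?_⟩
      rintro z ⟨W, ⟨⟨y, rfl⟩, hxW⟩, hzW⟩
      obtain ⟨B1, ⟨⟨c1, rfl⟩, hyB1⟩, hxB1⟩ := hxW
      obtain ⟨B2, ⟨⟨c2, rfl⟩, hyB2⟩, hzB2⟩ := hzW
      apply hball
      rw [Metric.mem_ball] at *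
      have h4 : dist x z ≤ dist x c1 + dist c1 y + dist y c2 + dist c2 z := by
        calc dist x z ≤ dist x y + dist y c2 + dist c2 z := dist_triangle4 x y c2 z
          _ ≤ (dist x c1 + dist c1 y) + dist y c2 + dist c2 z := by
              have := dist_triangle x c1 y
              linarith
          _ = dist x c1 + dist c1 y + dist y c2 + dist c2 z := by ring
      have hd1 : dist c1 y < (1/2 : ℝ)^n := by rw [dist_comm]; exact hyB1
      have hd2 : dist c2 z < (1/2 : ℝ)^n := by rw [dist_comm]; exact hzB2
      have hzx : dist z x = dist x z := dist_comm z x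
      linarith [hxB1, hyB2]
  · rintro ⟨u, hu1, hu2⟩
    classical
    have hucex : ∀ (i : ℕ) (x : X), ∃ U, U ∈ u i ∧ x ∈ U := by
      intro i x
      have hx : x ∈ ⋃₀ u i := (hu1 i).2 ▸ mem_univ x
      obtain ⟨U, hU, hxU⟩ := hx
      exact ⟨U, hU, hxU⟩
    choose uc hucm hucx using hucex
    set Vc : ℕ → Set (Set X) := fun n =>
      {S | ∃ f : ℕ → Set X, (∀ i ≤ n, f i ∈ u i) ∧ S = ⋂ i ∈ Finset.range (n+1), f i} with hVc
    have hVopen : ∀ n S, S ∈ Vc n → IsOpen S := by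
      rintro n S ⟨f, hf, rfl⟩
      exact isOpen_biInter_finset fun i hi =>
        (hu1 i).1 (f i) (hf i (Finset.mem_range_succ_iff.mp hi))
    have hVsub : ∀ n S, S ∈ Vc n → ∃ U ∈ u n, S ⊆ U := by
      rintro n S ⟨f, hf, rfl⟩
      refine ⟨f n, hf n le_rfl, ?_⟩
      intro x hx
      rw [Set.mem_iInter₂] at hx
      exact hx n (Finset.mem_range_succ_iff.mpr le_rfl)
    have hVpt : ∀ n x, ∃ S, S ∈ Vc n ∧ x ∈ S := by
      intro n x
      refine ⟨⋂ i ∈ Finset.range (n+1), uc i x, ⟨fun i => uc i x, fun i _ => hucm i x, rfl⟩, ?_⟩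
      rw [Set.mem_iInter₂]
      exact fun i _ => hucx i x
    have hVanti : ∀ (m n : ℕ), m ≤ n → ∀ S, S ∈ Vc n → ∃ T, T ∈ Vc m ∧ S ⊆ T := by
      rintro m n hmn S ⟨f, hf, rfl⟩
      refine ⟨⋂ i ∈ Finset.range (m+1), f i, ⟨f, fun i hi => hf i (hi.trans hmn), rfl⟩, ?_⟩
      intro x hx
      rw [Set.mem_iInter₂] at hx ⊢
      intro i hi
      exact hx i (Finset.mem_range_succ_iff.mpr ((Finset.mem_range_succ_iff.mp hi).trans hmn))
    set K : StarKit X :=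
      { R := fun n x y => ∃ S, S ∈ Vc n ∧ x ∈ S ∧ y ∈ S
        refl := fun n x => (hVpt n x).imp fun S hS => ⟨hS.1, hS.2, hS.2⟩
        symm := fun ⟨S, hS, hx, hy⟩ => ⟨S, hS, hy, hx⟩
        anti := by
          rintro m n x y hmn ⟨S, hS, hx, hy⟩
          obtain ⟨T, hT, hST⟩ := hVanti m n hmn S hS
          exact ⟨T, hT, hST hx, hST hy⟩
        opn := by
          intro n x
          have heq : {y | ∃ S, S ∈ Vc n ∧ x ∈ S ∧ y ∈ S} = ⋃₀ {S | S ∈ Vc n ∧ x ∈ S} := by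
            ext y
            simp only [mem_setOf_eq, mem_sUnion]
            tauto
          rw [heq]
          exact isOpen_sUnion fun S hS => hVopen n S hS.1
        nbhd := by
          intro m z
          obtain ⟨S, hS, hz⟩ := hVpt m z
          exact ⟨S, hVopen m S hS, hz, fun y y' hy hy' => ⟨S, hS, hy, hy'⟩⟩
        base := by
          intro x U hU hx
          obtain ⟨n, hn⟩ := hu2 x U hU hx
          refine ⟨n, ?_⟩
          rintro z ⟨y, ⟨S1, hS1, hx1, hy1⟩, ⟨S2, hS2, hy2, hz2⟩⟩
          obtain ⟨U1, hU1, hSU1⟩ := hVsub n S1 hS1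
          obtain ⟨U2, hU2, hSU2⟩ := hVsub n S2 hS2
          apply hn
          exact ⟨ptStar y (u n), ⟨⟨y, rfl⟩, ⟨U1, ⟨hU1, hSU1 hy1⟩, hSU1 hx1⟩⟩,
            ⟨U2, ⟨hU2, hSU2 hy2⟩, hSU2 hz2⟩⟩ }
    exact K.metrizableSpace
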